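/- An integer n is represented by the diagonal ternary form 3x² + 3y² + 6z² over ℤ if and only if n is divisible by 3 and n is not of the form 6·4^s·(8t + 7) for any non-negative integers s, t. -/

import Mathlib

lemma sq8 (a : ℤ) : a^2 % 8 = 0 ∨ a^2 % 8 = 1 ∨ a^2 % 8 = 4 := by
  have h4 : a % 4 = 0 ∨ a % 4 = 1 ∨ a % 4 = 2 ∨ a % 4 = 3 := by omega
  obtain ⟨k, hk⟩ : ∃ k, a = 4*k + a % 4 := ⟨a / 4, by omega⟩
  rcases h4 with h4 | h4 | h4 | h4 <;> rw [h4] at hk <;> subst hk <;> ring_nf <;> omega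

lemma sq4 (a : ℤ) : (a % 2 = 0 ∧ a^2 % 4 = 0) ∨ (a % 2 = 1 ∧ a^2 % 4 = 1) := by
  have h2 : a % 2 = 0 ∨ a % 2 = 1 := by omega
  obtain ⟨k, hk⟩ : ∃ k, a = 2*k + a % 2 := ⟨a / 2, by omega⟩
  rcases h2 with h2 | h2 <;> rw [h2] at hk <;> subst hk <;> ring_nf <;> omega

lemma threeSqNec (s t : ℕ) (a b c : ℤ) : a^2 + b^2 + c^2 ≠ 4^s * (8*t + 7) := by
  induction s generalizing a b c with
  | zero =>
    intro h
    have ha := sq8 a; have hb := sq8 b; have hc := sq8 c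
    have h8 : (a^2 + b^2 + c^2) % 8 = 7 := by rw [h]; push_cast; omega
    omega
  | succ s ih =>
    intro h
    have h4 : (4:ℤ) ∣ (a^2+b^2+c^2) := by
      rw [h]; exact ⟨4^s*(8*t+7), by ring⟩
    have ha := sq4 a; have hb := sq4 b; have hc := sq4 c
    have hae : a % 2 = 0 := by omega
    have hbe : b % 2 = 0 := by omega
    have hce : c % 2 = 0 := by omega
    obtain ⟨a', rfl⟩ : ∃ a', a = 2*a' := ⟨a/2, by omega⟩
    obtain ⟨b', rfl⟩ : ∃ b', b = 2*b' := ⟨b/2, by omega⟩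
    obtain ⟨c', rfl⟩ : ∃ c', c = 2*c' := ⟨c/2, by omega⟩
    refine ih a' b' c' ?_
    have h4s : (4:ℤ)^(s+1) = 4 * 4^s := by ring
    nlinarith [h, h4s]


/-- choose x with |a*x + w| ≤ a/2 -/
lemma exists_near (a w : ℤ) (ha : 1 ≤ a) : ∃ x : ℤ, (2*(a*x+w))^2 ≤ a^2 := by
  have h1 : 0 ≤ w % a := Int.emod_nonneg w (by omega)
  have h2 : w % a < a := Int.emod_lt_of_pos w (by omega)
  have h3 : a * (w / a) + w % a = w := Int.mul_ediv_add_emod w a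
  by_cases hle : 2 * (w % a) ≤ a
  · refine ⟨-(w/a), ?_⟩
    have h4 : a * -(w/a) + w = w % a := by linarith [h3]
    rw [h4]; nlinarith
  · refine ⟨-(w/a) - 1, ?_⟩
    have h4 : a * (-(w/a) - 1) + w = w % a - a := by linarith [h3]
    rw [h4]; nlinarith

lemma bin_min (b p c : ℤ)
    (hpos : ∀ y z : ℤ, (y ≠ 0 ∨ z ≠ 0) → 1 ≤ b*y^2+2*p*y*z+c*z^2) :
    ∃ ν : ℤ, 1 ≤ ν ∧
      (∃ y z : ℤ, Int.gcd y z = 1 ∧ b*y^2+2*p*y*z+c*z^2 = ν) ∧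
      (∀ y z : ℤ, (y ≠ 0 ∨ z ≠ 0) → ν ≤ b*y^2+2*p*y*z+c*z^2) ∧
      3*ν^2 ≤ 4*(b*c-p^2) := by
  classical
  set S : Set ℕ := {k | ∃ y z : ℤ, (y ≠ 0 ∨ z ≠ 0) ∧ b*y^2+2*p*y*z+c*z^2 = (k:ℤ)} with hS
  have hb1 : 1 ≤ b*1^2+2*p*1*0+c*0^2 := hpos 1 0 (Or.inl one_ne_zero)
  have hSne : S.Nonempty := ⟨(b*1^2+2*p*1*0+c*0^2).toNat, 1, 0, Or.inl one_ne_zero, by omega⟩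
  obtain ⟨y₀, z₀, hne₀, hval₀⟩ := Nat.sInf_mem hSne
  have hmin : ∀ y z : ℤ, (y ≠ 0 ∨ z ≠ 0) → ((sInf S : ℕ):ℤ) ≤ b*y^2+2*p*y*z+c*z^2 := by
    intro y z hyz
    have h1 : 1 ≤ b*y^2+2*p*y*z+c*z^2 := hpos y z hyz
    have hmem : (b*y^2+2*p*y*z+c*z^2).toNat ∈ S := ⟨y, z, hyz, by omega⟩
    have := Nat.sInf_le hmem
    omega
  set ν : ℤ := ((sInf S : ℕ):ℤ) with hνdef
  have hν1 : 1 ≤ ν := le_trans (hpos y₀ z₀ hne₀) (le_of_eq hval₀)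
  -- primitivity
  have hg : Int.gcd y₀ z₀ = 1 := by
    by_contra hgne
    obtain ⟨g, hgdef⟩ : ∃ g:ℕ, g = Int.gcd y₀ z₀ := ⟨_, rfl⟩
    obtain ⟨y₁, hy₁⟩ : ((g:ℕ):ℤ) ∣ y₀ := hgdef ▸ Int.gcd_dvd_left _ _
    obtain ⟨z₁, hz₁⟩ : ((g:ℕ):ℤ) ∣ z₀ := hgdef ▸ Int.gcd_dvd_right _ _
    have hg0 : g ≠ 0 := by
      rw [hgdef, ne_eq, Int.gcd_eq_zero_iff]
      rintro ⟨rfl, rfl⟩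
      exact (by tauto : False)
    have hg2 : 2 ≤ ((g:ℕ):ℤ) := by
      have : 2 ≤ g := by omega
      exact_mod_cast this
    have hne₁ : y₁ ≠ 0 ∨ z₁ ≠ 0 := by
      rcases hne₀ with h | h
      · left; rintro rfl; rw [mul_zero] at hy₁; exact h hy₁
      · right; rintro rfl; rw [mul_zero] at hz₁; exact h hz₁
    have hval₁ : ((g:ℕ):ℤ)^2 * (b*y₁^2+2*p*y₁*z₁+c*z₁^2) = ν := by
      linear_combination hval₀ - (b*(y₀+(g:ℤ)*y₁) + 2*p*z₀) * hy₁
        - (2*p*(g:ℤ)*y₁ + c*(z₀+(g:ℤ)*z₁)) * hz₁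
    have hm := hmin y₁ z₁ hne₁
    have hp1 := hpos y₁ z₁ hne₁
    have h4 : 4 ≤ ((g:ℕ):ℤ)^2 := by nlinarith
    nlinarith [h4, hval₁, hm, hp1]
  -- Bezout / change of basis
  have hbez : y₀ * Int.gcdA y₀ z₀ + z₀ * Int.gcdB y₀ z₀ = 1 := by
    have := Int.gcd_eq_gcd_ab y₀ z₀
    rw [hg] at this; exact_mod_cast this.symm
  set u : ℤ := Int.gcdA y₀ z₀ with hu
  set v : ℤ := Int.gcdB y₀ z₀ with hv
  set P : ℤ := b*y₀*(-v) + p*(y₀*u + (-v)*z₀) + c*z₀*u with hP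
  set C : ℤ := b*v^2 - 2*p*v*u + c*u^2 with hC
  obtain ⟨x, hx⟩ := exists_near ν P hν1
  have hvec : (x*y₀ - v ≠ 0 ∨ x*z₀ + u ≠ 0) := by
    by_contra hcon
    push_neg at hcon
    obtain ⟨e1, e2⟩ := hcon
    have hzz : -z₀ * (x*y₀ - v) + y₀ * (x*z₀ + u) = 1 := by linear_combination hbez
    rw [e1, e2] at hzz; simp at hzz
  have hval : b*(x*y₀ - v)^2 + 2*p*(x*y₀ - v)*(x*z₀ + u) + c*(x*z₀ + u)^2
      = ν*x^2 + 2*P*x + C := by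
    linear_combination x^2 * hval₀
  have hm2 := hmin (x*y₀ - v) (x*z₀ + u) hvec
  rw [hval] at hm2
  have hdet : ν * C - P^2 = b*c - p^2 := by
    have hb2 : y₀*u + v*z₀ = 1 := by linarith [hbez]
    have hdetid : ν * C - P^2 = (b*c - p^2) * (y₀*u + v*z₀)^2 := by
      linear_combination (-C) * hval₀
    rw [hdetid, hb2]; ring
  refine ⟨ν, hν1, ⟨y₀, z₀, hg, hval₀⟩, hmin, ?_⟩
  nlinarith [hx, hm2, hdet, hν1]

lemma bin_det_one (b p c : ℤ)
    (hpos : ∀ y z : ℤ, (y ≠ 0 ∨ z ≠ 0) → 1 ≤ b*y^2+2*p*y*z+c*z^2)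
    (hdet : b*c - p^2 = 1) :
    ∃ m11 m12 m21 m22 : ℤ, m11*m22 - m12*m21 = 1 ∧ ∀ y z : ℤ,
      b*(m11*y+m12*z)^2 + 2*p*(m11*y+m12*z)*(m21*y+m22*z) + c*(m21*y+m22*z)^2
        = y^2 + z^2 := by
  obtain ⟨ν, hν1, ⟨y₀, z₀, hg, hval⟩, hmin, hbound⟩ := bin_min b p c hpos
  rw [hdet] at hbound
  have hν : ν = 1 := by nlinarith
  rw [hν] at hval
  have hbez : y₀ * Int.gcdA y₀ z₀ + z₀ * Int.gcdB y₀ z₀ = 1 := by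
    have := Int.gcd_eq_gcd_ab y₀ z₀
    rw [hg] at this; exact_mod_cast this.symm
  set u : ℤ := Int.gcdA y₀ z₀ with hu
  set v : ℤ := Int.gcdB y₀ z₀ with hv
  set P : ℤ := b*y₀*(-v) + p*(y₀*u + (-v)*z₀) + c*z₀*u with hP
  refine ⟨y₀, -y₀*P - v, z₀, u - z₀*P, by linear_combination hbez, ?_⟩
  have f1 : b*y₀^2 + 2*p*y₀*z₀ + c*z₀^2 = 1 := hval
  have f2 : b*y₀*(-y₀*P - v) + p*(y₀*(u - z₀*P) + (-y₀*P - v)*z₀) + c*z₀*(u - z₀*P)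
      = 0 := by linear_combination (-P) * f1
  have hdet' : y₀*(u - z₀*P) - (-y₀*P - v)*z₀ = 1 := by linear_combination hbez
  have f3 : b*(-y₀*P - v)^2 + 2*p*(-y₀*P - v)*(u - z₀*P) + c*(u - z₀*P)^2 = 1 := by
    have hid : (b*y₀^2 + 2*p*y₀*z₀ + c*z₀^2) *
        (b*(-y₀*P - v)^2 + 2*p*(-y₀*P - v)*(u - z₀*P) + c*(u - z₀*P)^2)
        - (b*y₀*(-y₀*P - v) + p*(y₀*(u - z₀*P) + (-y₀*P - v)*z₀) + c*z₀*(u - z₀*P))^2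
        = (b*c - p^2)*(y₀*(u - z₀*P) - (-y₀*P - v)*z₀)^2 := by ring
    rw [f1, f2, hdet, hdet'] at hid
    linarith [hid]
  intro y z
  linear_combination (y^2) * f1 + (2*y*z) * f2 + (z^2) * f3


def F3 (a b c p q r x y z : ℤ) : ℤ :=
  a*x^2 + b*y^2 + c*z^2 + 2*(p*y*z + q*x*z + r*x*y)

def PHI3 (a b c p q r x1 y1 z1 x2 y2 z2 : ℤ) : ℤ :=
  a*x1*x2 + b*y1*y2 + c*z1*z2 + p*(y1*z2+z1*y2) + q*(x1*z2+z1*x2) + r*(x1*y2+y1*x2)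

def D3 (a b c p q r : ℤ) : ℤ := a*b*c + 2*p*q*r - a*p^2 - b*q^2 - c*r^2

lemma t_transform (a b c p q r m11 m12 m13 m21 m22 m23 m31 m32 m33 : ℤ)
    (hdetM : m11*(m22*m33 - m23*m32) - m12*(m21*m33 - m23*m31)
      + m13*(m21*m32 - m22*m31) = 1) :
    (D3 (F3 a b c p q r m11 m21 m31) (F3 a b c p q r m12 m22 m32) (F3 a b c p q r m13 m23 m33)
       (PHI3 a b c p q r m12 m22 m32 m13 m23 m33)
       (PHI3 a b c p q r m11 m21 m31 m13 m23 m33)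
       (PHI3 a b c p q r m11 m21 m31 m12 m22 m32) = D3 a b c p q r)
    ∧ (∀ μ : ℤ, (∀ x y z : ℤ, (x ≠ 0 ∨ y ≠ 0 ∨ z ≠ 0) → μ ≤ F3 a b c p q r x y z) →
        ∀ x y z : ℤ, (x ≠ 0 ∨ y ≠ 0 ∨ z ≠ 0) →
          μ ≤ F3 (F3 a b c p q r m11 m21 m31) (F3 a b c p q r m12 m22 m32)
              (F3 a b c p q r m13 m23 m33)
              (PHI3 a b c p q r m12 m22 m32 m13 m23 m33)
              (PHI3 a b c p q r m11 m21 m31 m13 m23 m33)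
              (PHI3 a b c p q r m11 m21 m31 m12 m22 m32) x y z)
    ∧ (∀ n : ℤ, (∃ x y z : ℤ, F3 a b c p q r x y z = n) →
        ∃ x y z : ℤ, F3 (F3 a b c p q r m11 m21 m31) (F3 a b c p q r m12 m22 m32)
            (F3 a b c p q r m13 m23 m33)
            (PHI3 a b c p q r m12 m22 m32 m13 m23 m33)
            (PHI3 a b c p q r m11 m21 m31 m13 m23 m33)
            (PHI3 a b c p q r m11 m21 m31 m12 m22 m32) x y z = n) := by
  have hval : ∀ x y z : ℤ,
      F3 (F3 a b c p q r m11 m21 m31) (F3 a b c p q r m12 m22 m32) (F3 a b c p q r m13 m23 m33)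
       (PHI3 a b c p q r m12 m22 m32 m13 m23 m33)
       (PHI3 a b c p q r m11 m21 m31 m13 m23 m33)
       (PHI3 a b c p q r m11 m21 m31 m12 m22 m32) x y z
      = F3 a b c p q r (m11*x+m12*y+m13*z) (m21*x+m22*y+m23*z) (m31*x+m32*y+m33*z) := by
    intro x y z; simp only [F3, PHI3]; ring
  refine ⟨?_, ?_, ?_⟩
  · simp only [D3, F3, PHI3]
    linear_combination (a*b*c + 2*p*q*r - a*p^2 - b*q^2 - c*r^2) *
      (m11*(m22*m33 - m23*m32) - m12*(m21*m33 - m23*m31) + m13*(m21*m32 - m22*m31) + 1) * hdetM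
  · intro μ hpos x y z hne
    rw [hval]
    refine hpos _ _ _ ?_
    by_contra hcon
    push_neg at hcon
    obtain ⟨e1, e2, e3⟩ := hcon
    -- apply adjugate rows
    have k1 : (m22*m33 - m23*m32)*(m11*x+m12*y+m13*z)
        - (m12*m33 - m13*m32)*(m21*x+m22*y+m23*z)
        + (m12*m23 - m13*m22)*(m31*x+m32*y+m33*z) = x := by linear_combination x*hdetM
    have k2 : -(m21*m33 - m23*m31)*(m11*x+m12*y+m13*z)
        + (m11*m33 - m13*m31)*(m21*x+m22*y+m23*z)
        - (m11*m23 - m13*m21)*(m31*x+m32*y+m33*z) = y := by linear_combination y*hdetM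
    have k3 : (m21*m32 - m22*m31)*(m11*x+m12*y+m13*z)
        - (m11*m32 - m12*m31)*(m21*x+m22*y+m23*z)
        + (m11*m22 - m12*m21)*(m31*x+m32*y+m33*z) = z := by linear_combination z*hdetM
    rw [e1, e2, e3] at k1 k2 k3
    simp at k1 k2 k3
    tauto
  · rintro n ⟨x, y, z, hxyz⟩
    refine ⟨(m22*m33 - m23*m32)*x - (m12*m33 - m13*m32)*y + (m12*m23 - m13*m22)*z,
            -(m21*m33 - m23*m31)*x + (m11*m33 - m13*m31)*y - (m11*m23 - m13*m21)*z,
            (m21*m32 - m22*m31)*x - (m11*m32 - m12*m31)*y + (m11*m22 - m12*m21)*z, ?_⟩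
    rw [hval, ← hxyz]
    have e1 : m11*((m22*m33 - m23*m32)*x - (m12*m33 - m13*m32)*y + (m12*m23 - m13*m22)*z)
        + m12*(-(m21*m33 - m23*m31)*x + (m11*m33 - m13*m31)*y - (m11*m23 - m13*m21)*z)
        + m13*((m21*m32 - m22*m31)*x - (m11*m32 - m12*m31)*y + (m11*m22 - m12*m21)*z)
        = x := by linear_combination x*hdetM
    have e2 : m21*((m22*m33 - m23*m32)*x - (m12*m33 - m13*m32)*y + (m12*m23 - m13*m22)*z)
        + m22*(-(m21*m33 - m23*m31)*x + (m11*m33 - m13*m31)*y - (m11*m23 - m13*m21)*z)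
        + m23*((m21*m32 - m22*m31)*x - (m11*m32 - m12*m31)*y + (m11*m22 - m12*m21)*z)
        = y := by linear_combination y*hdetM
    have e3 : m31*((m22*m33 - m23*m32)*x - (m12*m33 - m13*m32)*y + (m12*m23 - m13*m22)*z)
        + m32*(-(m21*m33 - m23*m31)*x + (m11*m33 - m13*m31)*y - (m11*m23 - m13*m21)*z)
        + m33*((m21*m32 - m22*m31)*x - (m11*m32 - m12*m31)*y + (m11*m22 - m12*m21)*z)
        = z := by linear_combination z*hdetM
    rw [e1, e2, e3]

lemma tern_min (a b c p q r : ℤ)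
    (hpos : ∀ x y z : ℤ, (x ≠ 0 ∨ y ≠ 0 ∨ z ≠ 0) → 1 ≤ F3 a b c p q r x y z) :
    ∃ μ : ℤ, 1 ≤ μ ∧
      (∃ x y z : ℤ, Int.gcd (Int.gcd x y) z = 1 ∧ F3 a b c p q r x y z = μ) ∧
      (∀ x y z : ℤ, (x ≠ 0 ∨ y ≠ 0 ∨ z ≠ 0) → μ ≤ F3 a b c p q r x y z) := by
  classical
  set S : Set ℕ := {k | ∃ x y z : ℤ, (x ≠ 0 ∨ y ≠ 0 ∨ z ≠ 0) ∧ F3 a b c p q r x y z = (k:ℤ)}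
    with hS
  have ha1 : 1 ≤ F3 a b c p q r 1 0 0 := hpos 1 0 0 (Or.inl one_ne_zero)
  have hSne : S.Nonempty := ⟨(F3 a b c p q r 1 0 0).toNat, 1, 0, 0, Or.inl one_ne_zero, by omega⟩
  obtain ⟨x₀, y₀, z₀, hne₀, hval₀⟩ := Nat.sInf_mem hSne
  have hmin : ∀ x y z : ℤ, (x ≠ 0 ∨ y ≠ 0 ∨ z ≠ 0) →
      ((sInf S : ℕ):ℤ) ≤ F3 a b c p q r x y z := by
    intro x y z hyz
    have h1 : 1 ≤ F3 a b c p q r x y z := hpos x y z hyz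
    have hmem : (F3 a b c p q r x y z).toNat ∈ S := ⟨x, y, z, hyz, by omega⟩
    have := Nat.sInf_le hmem
    omega
  set ν : ℤ := ((sInf S : ℕ):ℤ) with hνdef
  have hν1 : 1 ≤ ν := le_trans (hpos x₀ y₀ z₀ hne₀) (le_of_eq hval₀)
  refine ⟨ν, hν1, ?_, hmin⟩
  have hg : Int.gcd (Int.gcd x₀ y₀) z₀ = 1 := by
    by_contra hgne
    obtain ⟨g, hgdef⟩ : ∃ g:ℕ, g = Int.gcd (Int.gcd x₀ y₀) z₀ := ⟨_, rfl⟩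
    have hdx : ((g:ℕ):ℤ) ∣ x₀ := by
      rw [hgdef]; exact dvd_trans (Int.gcd_dvd_left _ _) (Int.gcd_dvd_left _ _)
    have hdy : ((g:ℕ):ℤ) ∣ y₀ := by
      rw [hgdef]; exact dvd_trans (Int.gcd_dvd_left _ _) (Int.gcd_dvd_right _ _)
    have hdz : ((g:ℕ):ℤ) ∣ z₀ := by rw [hgdef]; exact Int.gcd_dvd_right _ _
    obtain ⟨x₁, hx₁⟩ := hdx
    obtain ⟨y₁, hy₁⟩ := hdy
    obtain ⟨z₁, hz₁⟩ := hdz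
    have hg0 : g ≠ 0 := by
      rw [hgdef]
      simp only [ne_eq, Int.gcd_eq_zero_iff, Int.natCast_eq_zero]
      rintro ⟨⟨rfl, rfl⟩, rfl⟩
      exact (by tauto : False)
    have hg2 : 2 ≤ ((g:ℕ):ℤ) := by
      have : 2 ≤ g := by omega
      exact_mod_cast this
    have hne₁ : x₁ ≠ 0 ∨ y₁ ≠ 0 ∨ z₁ ≠ 0 := by
      rcases hne₀ with h | h | h
      · left; rintro rfl; rw [mul_zero] at hx₁; exact h hx₁
      · right; left; rintro rfl; rw [mul_zero] at hy₁; exact h hy₁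
      · right; right; rintro rfl; rw [mul_zero] at hz₁; exact h hz₁
    have hval₁ : ((g:ℕ):ℤ)^2 * (F3 a b c p q r x₁ y₁ z₁) = ν := by
      rw [← hval₀, hx₁, hy₁, hz₁]; simp only [F3]; ring
    have hm := hmin x₁ y₁ z₁ hne₁
    have hp1 := hpos x₁ y₁ z₁ hne₁
    have h4 : 4 ≤ ((g:ℕ):ℤ)^2 := by nlinarith
    nlinarith [h4, hval₁, hm, hp1]
  exact ⟨x₀, y₀, z₀, hg, hval₀⟩

/-- a primitive vector is the first column of an SL₃ matrix -/
lemma primitive_extend (x y z : ℤ) (hg : Int.gcd (Int.gcd x y) z = 1) :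
    ∃ m12 m13 m22 m23 m32 m33 : ℤ,
      x*(m22*m33 - m23*m32) - m12*(y*m33 - m23*z) + m13*(y*m32 - m22*z) = 1 := by
  by_cases hyz : y = 0 ∧ z = 0
  · obtain ⟨rfl, rfl⟩ := hyz
    -- gcd(gcd(x,0),0) = |x| = 1
    have hx : x = 1 ∨ x = -1 := by
      have : Int.gcd (Int.gcd x 0) 0 = x.natAbs := by simp [Int.gcd, Int.natAbs_abs]
      rw [this] at hg
      rcases Int.natAbs_eq x with h | h <;> omega
    rcases hx with rfl | rfl
    · exact ⟨0, 0, 1, 0, 0, 1, by ring⟩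
    · exact ⟨0, 0, 1, 0, 0, -1, by ring⟩
  · have hg2pos : Int.gcd y z ≠ 0 := by
      rw [ne_eq, Int.gcd_eq_zero_iff]; tauto
    obtain ⟨g2, hg2⟩ : ∃ g2:ℕ, g2 = Int.gcd y z := ⟨_, rfl⟩
    obtain ⟨y', hy'⟩ : ((g2:ℕ):ℤ) ∣ y := by rw [hg2]; exact Int.gcd_dvd_left _ _
    obtain ⟨z', hz'⟩ : ((g2:ℕ):ℤ) ∣ z := by rw [hg2]; exact Int.gcd_dvd_right _ _
    -- gcd(y', z') = 1
    have hyz' : Int.gcd y' z' = 1 := by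
      have h := hg2
      rw [hy', hz'] at h
      rw [Int.gcd_mul_left] at h
      have hg2n : (g2:ℕ) ≠ 0 := by
        intro h0; rw [h0] at hg2; exact hg2pos hg2.symm
      simp only [Int.natAbs_natCast] at h
      have hc : g2 * 1 = g2 * Int.gcd y' z' := by rw [mul_one]; exact h
      have := Nat.eq_of_mul_eq_mul_left (Nat.pos_of_ne_zero hg2n) hc
      omega
    -- gcd(x, g2) = 1
    have hxg2 : Int.gcd x (g2:ℤ) = 1 := by
      have hassoc : Int.gcd (Int.gcd x y) z = Int.gcd x (Int.gcd y z) := by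
        rw [Int.gcd_assoc]
      rw [hassoc] at hg
      rwa [← hg2] at hg
      
    have hbez1 : y' * Int.gcdA y' z' + z' * Int.gcdB y' z' = 1 := by
      have := Int.gcd_eq_gcd_ab y' z'
      rw [hyz'] at this; exact_mod_cast this.symm
    have hbez2 : x * Int.gcdA x (g2:ℤ) + (g2:ℤ) * Int.gcdB x (g2:ℤ) = 1 := by
      have := Int.gcd_eq_gcd_ab x ((g2:ℕ):ℤ)
      rw [hxg2] at this
      exact_mod_cast this.symm
    set u : ℤ := Int.gcdA y' z'
    set v : ℤ := Int.gcdB y' z'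
    set s : ℤ := Int.gcdA x (g2:ℤ)
    set t : ℤ := Int.gcdB x (g2:ℤ)
    refine ⟨-t, 0, s*y', -v, s*z', u, ?_⟩
    -- det = x*s*(u y' + v z') + t*(u y + v z) = x*s + t*g2 = 1
    rw [hy', hz']
    linear_combination (x*s + t*(g2:ℤ)) * hbez1 + hbez2

lemma corner_one (a b c p q r : ℤ) (hdet : D3 a b c p q r = 1)
    (hmin : ∀ x y z : ℤ, (x ≠ 0 ∨ y ≠ 0 ∨ z ≠ 0) → a ≤ F3 a b c p q r x y z)
    (hcorner : 1 ≤ a) : a = 1 := by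
  -- quotient binary form G = (a*b - r², a*p - q*r, a*c - q²)
  set B : ℤ := a*b - r^2 with hB
  set P : ℤ := a*p - q*r with hP
  set C : ℤ := a*c - q^2 with hC
  have hkey : ∀ x y z : ℤ, B*y^2 + 2*P*y*z + C*z^2
      = a * F3 a b c p q r x y z - (a*x + r*y + q*z)^2 := by
    intro x y z; simp only [F3, hB, hP, hC]; ring
  have hGlow : ∀ y z : ℤ, (y ≠ 0 ∨ z ≠ 0) → 3*a^2 ≤ 4*(B*y^2 + 2*P*y*z + C*z^2) := by
    intro y z hyz
    obtain ⟨x, hx⟩ := exists_near a (r*y + q*z) hcorner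
    have hf := hmin x y z (by tauto)
    have hk := hkey x y z
    nlinarith [hx, hf, hk, hcorner]
  have hGpos : ∀ y z : ℤ, (y ≠ 0 ∨ z ≠ 0) → 1 ≤ B*y^2 + 2*P*y*z + C*z^2 := by
    intro y z hyz
    have := hGlow y z hyz
    nlinarith [hcorner]
  obtain ⟨ν, hν1, ⟨y₀, z₀, hg, hval⟩, hmin2, hbound⟩ := bin_min B P C hGpos
  have hdet2 : B*C - P^2 = a := by
    simp only [hB, hP, hC]
    have : a * D3 a b c p q r = a := by rw [hdet]; ring
    simp only [D3] at this
    linarith [this]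
  rw [hdet2] at hbound
  have hne₀ : y₀ ≠ 0 ∨ z₀ ≠ 0 := by
    by_contra hcon
    push_neg at hcon
    obtain ⟨rfl, rfl⟩ := hcon
    simp at hg
  have hν : 3*a^2 ≤ 4*ν := by
    have := hGlow y₀ z₀ hne₀
    omega
  -- 27 a⁴ ≤ 48 ν² ≤ 64 a,  a ≥ 1  ⇒  a = 1
  have ha1 : a ≤ 1 := by nlinarith [hν, hbound, hcorner]
  omega

theorem ternary_rep (a b c p q r n : ℤ)
    (hpos : ∀ x y z : ℤ, (x ≠ 0 ∨ y ≠ 0 ∨ z ≠ 0) → 1 ≤ F3 a b c p q r x y z)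
    (hdet : D3 a b c p q r = 1)
    (hrep : ∃ x y z : ℤ, F3 a b c p q r x y z = n) :
    ∃ u v w : ℤ, u^2 + v^2 + w^2 = n := by
  obtain ⟨μ, hμ1, ⟨x₀, y₀, z₀, hg, hval⟩, hmin⟩ := tern_min a b c p q r hpos
  obtain ⟨m12, m13, m22, m23, m32, m33, hdetM⟩ := primitive_extend x₀ y₀ z₀ hg
  obtain ⟨hD, hposT, hrepT⟩ :=
    t_transform a b c p q r x₀ m12 m13 y₀ m22 m23 z₀ m32 m33 hdetM
  set a₁ : ℤ := F3 a b c p q r x₀ y₀ z₀ with ha₁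
  set b₁ : ℤ := F3 a b c p q r m12 m22 m32 with hb₁
  set c₁ : ℤ := F3 a b c p q r m13 m23 m33 with hc₁
  set p₁ : ℤ := PHI3 a b c p q r m12 m22 m32 m13 m23 m33 with hp₁
  set q₁ : ℤ := PHI3 a b c p q r x₀ y₀ z₀ m13 m23 m33 with hq₁
  set r₁ : ℤ := PHI3 a b c p q r x₀ y₀ z₀ m12 m22 m32 with hr₁
  rw [hdet] at hD
  have hminT := hposT μ hmin
  have hposT1 := hposT 1 hpos
  have hμa : a₁ = μ := hval
  have ha1 : a₁ = 1 := by
    rw [hμa]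
    refine corner_one μ b₁ c₁ p₁ q₁ r₁ (by rw [← hμa]; exact hD) ?_ hμ1
    rw [hμa] at hminT
    exact hminT
  rw [ha1] at hD hposT1 hrepT
  -- shear: n = x₃² + B₂(y,z) with B₂ = (b₁ - r₁², p₁ - q₁*r₁, c₁ - q₁²)
  obtain ⟨x₂, y₂, z₂, hx2⟩ := hrepT n hrep
  have hshear : ∀ x y z : ℤ, F3 1 b₁ c₁ p₁ q₁ r₁ x y z
      = (x + r₁*y + q₁*z)^2 + ((b₁ - r₁^2)*y^2 + 2*(p₁ - q₁*r₁)*y*z + (c₁ - q₁^2)*z^2) := by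
    intro x y z; simp only [F3]; ring
  have hbinpos : ∀ y z : ℤ, (y ≠ 0 ∨ z ≠ 0) →
      1 ≤ (b₁ - r₁^2)*y^2 + 2*(p₁ - q₁*r₁)*y*z + (c₁ - q₁^2)*z^2 := by
    intro y z hyz
    have h := hposT1 (-r₁*y - q₁*z) y z (by tauto)
    have hs := hshear (-r₁*y - q₁*z) y z
    rw [hs] at h
    have : (-r₁*y - q₁*z + r₁*y + q₁*z) = 0 := by ring
    rw [this] at h
    simpa using h
  have hbindet : (b₁ - r₁^2)*(c₁ - q₁^2) - (p₁ - q₁*r₁)^2 = 1 := by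
    simp only [D3] at hD
    linarith [hD]
  obtain ⟨k11, k12, k21, k22, hdetK, hK⟩ :=
    bin_det_one (b₁ - r₁^2) (p₁ - q₁*r₁) (c₁ - q₁^2) hbinpos hbindet
  refine ⟨x₂ + r₁*y₂ + q₁*z₂, k22*y₂ - k12*z₂, -k21*y₂ + k11*z₂, ?_⟩
  have hKinv := hK (k22*y₂ - k12*z₂) (-k21*y₂ + k11*z₂)
  have e1 : k11*(k22*y₂ - k12*z₂) + k12*(-k21*y₂ + k11*z₂) = y₂ := by
    linear_combination y₂ * hdetK
  have e2 : k21*(k22*y₂ - k12*z₂) + k22*(-k21*y₂ + k11*z₂) = z₂ := by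
    linear_combination z₂ * hdetK
  rw [e1, e2] at hKinv
  have := hshear x₂ y₂ z₂
  rw [this] at hx2
  linarith [hKinv, hx2]


lemma sqrt_mod (q : ℕ) (hq : q.Prime) (D : ℤ) (hJ : jacobiSym (-D) q = 1) :
    ∃ b : ℤ, (q:ℤ) ∣ b^2 + D := by
  haveI : Fact q.Prime := ⟨hq⟩
  have hsq : IsSquare ((-D : ℤ) : ZMod q) := ZMod.isSquare_of_jacobiSym_eq_one hJ
  obtain ⟨ρ, hρ⟩ := hsq
  obtain ⟨b, hb⟩ := ZMod.intCast_surjective (n := q) ρ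
  refine ⟨b, (ZMod.intCast_zmod_eq_zero_iff_dvd _ q).mp ?_⟩
  have : ((b^2 + D : ℤ) : ZMod q) = ρ * ρ + ((D:ℤ) : ZMod q) := by
    push_cast [hb]; ring
  rw [this, ← hρ]
  push_cast
  ring

lemma dirichlet_class (M cls bound : ℕ) (hM : 0 < M) (hco : Nat.Coprime cls M) :
    ∃ q : ℕ, q.Prime ∧ q > bound ∧ q % M = cls % M := by
  haveI : NeZero M := ⟨hM.ne'⟩
  obtain ⟨q, hq1, hq2, hq3⟩ := Nat.forall_exists_prime_gt_and_eq_mod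
      (q := M) (a := (cls : ZMod M)) ((ZMod.isUnit_iff_coprime cls M).mpr hco) bound
  exact ⟨q, hq2, hq1, (ZMod.natCast_eq_natCast_iff _ _ _).mp hq3⟩

lemma coprime_helper (c N : ℕ) (hodd : c % 2 = 1) (hN : ∀ g : ℕ, g ∣ c → g ∣ N → g ∣ 1) :
    Nat.Coprime c (4*N) := by
  have h2 : Nat.Coprime c 2 := by
    rw [Nat.coprime_comm]
    rw [Nat.Prime.coprime_iff_not_dvd Nat.prime_two]
    omega
  have h4 : Nat.Coprime c 4 := by
    have := h2.pow_right 2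
    norm_num at this
    exact this
  have hNc : Nat.Coprime c N :=
    Nat.dvd_one.mp (hN _ (Nat.gcd_dvd_left c N) (Nat.gcd_dvd_right c N))
  exact Nat.Coprime.mul_right h4 hNc

lemma caseA (N : ℕ) (hN2 : 2 ≤ N) (hmod : N % 4 = 2) :
    ∃ D b c₀ a : ℤ, 1 ≤ D ∧ 1 ≤ c₀ ∧ (N:ℤ)*D - 1 = c₀ ∧ a*c₀ = b^2 + D := by
  have hco : Nat.Coprime (N-1) (4*N) := by
    refine coprime_helper _ _ (by omega) (fun g hg1 hg2 => ?_)
    have := Nat.dvd_sub hg2 hg1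
    rwa [show N - (N-1) = 1 from by omega] at this
  obtain ⟨q, hqp, hqgt, hqmod⟩ := dirichlet_class (4*N) (N-1) (4*N) (by omega) hco
  have hcls : (N-1) % (4*N) = N - 1 := Nat.mod_eq_of_lt (by omega)
  obtain ⟨k, hk⟩ : ∃ k : ℕ, q = (N-1) + (4*N)*k := by
    refine ⟨q / (4*N), ?_⟩
    have h := Nat.div_add_mod q (4*N)
    rw [hqmod, hcls] at h
    omega
  obtain ⟨m, hm1, hm2⟩ : ∃ m : ℕ, q = (N-1) + 4*m ∧ m = N*k :=
    ⟨N*k, by rw [hk]; ring, rfl⟩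
  set n : ℤ := (N:ℤ) with hn
  set D : ℤ := 1 + 4*(k:ℤ) with hD
  have hmz : ((m:ℕ):ℤ) = n * (k:ℤ) := by rw [hm2]; push_cast; ring
  have hqz : (q:ℤ) = n - 1 + 4*(m:ℤ) := by rw [hn]; omega
  have hnD : n * D = (q:ℤ) + 1 := by
    rw [hD]; linear_combination (-1)*hqz - 4*hmz
  set Dn : ℕ := 1 + 4*k with hDn
  have hDcast : ((Dn:ℕ):ℤ) = D := by push_cast [hD, hDn]; ring
  have hDodd : Odd Dn := by rw [Nat.odd_iff]; omega
  have hD4 : Dn % 4 = 1 := by omega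
  have hqodd : Odd q := hqp.odd_of_ne_two (by omega)
  have hq4 : q % 4 = 1 := by omega
  have hJm1 : jacobiSym (-1) q = 1 := by
    rw [jacobiSym.at_neg_one hqodd, ZMod.χ₄_nat_one_mod_four hq4]
  have hrec : jacobiSym (Dn:ℤ) q = jacobiSym (q:ℤ) Dn :=
    jacobiSym.quadratic_reciprocity_one_mod_four' hDodd hq4
  have hmodD : jacobiSym (q:ℤ) Dn = jacobiSym (-1) Dn := by
    refine jacobiSym.mod_left' ?_
    have : ((q:ℤ)) ≡ -1 [ZMOD (Dn:ℕ)] := by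
      rw [Int.modEq_iff_dvd]
      exact ⟨-n, by rw [hDcast]; linarith [hnD]⟩
    exact this
  have hJm1D : jacobiSym (-1) Dn = 1 := by
    rw [jacobiSym.at_neg_one hDodd, ZMod.χ₄_nat_one_mod_four hD4]
  have hJD : jacobiSym (-D) q = 1 := by
    have hsplit : (-D) = (-1) * (Dn:ℤ) := by rw [hDcast]; ring
    rw [hsplit, jacobiSym.mul_left, hJm1, hrec, hmodD, hJm1D]; ring
  obtain ⟨b, hdvd⟩ := sqrt_mod q hqp D hJD
  obtain ⟨a, ha⟩ := hdvd
  refine ⟨D, b, (q:ℤ), a, by omega, by exact_mod_cast hqp.one_lt.le, by linarith [hnD], by linarith [ha]⟩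

lemma caseB (N : ℕ) (hN2 : 2 ≤ N) (hmod : N % 8 = 1 ∨ N % 8 = 5) :
    ∃ D b c₀ a : ℤ, 1 ≤ D ∧ 1 ≤ c₀ ∧ (N:ℤ)*D - 1 = c₀ ∧ a*c₀ = b^2 + D := by
  have hco : Nat.Coprime (2*N-1) (4*(2*N)) := by
    refine coprime_helper _ _ (by omega) (fun g hg1 hg2 => ?_)
    have := Nat.dvd_sub hg2 hg1
    rwa [show 2*N - (2*N-1) = 1 from by omega] at this
  obtain ⟨q, hqp, hqgt, hqmod⟩ := dirichlet_class (4*(2*N)) (2*N-1) (8*N) (by omega) hco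
  have hcls : (2*N-1) % (4*(2*N)) = 2*N - 1 := Nat.mod_eq_of_lt (by omega)
  obtain ⟨k, hk⟩ : ∃ k : ℕ, q = (2*N-1) + (4*(2*N))*k := by
    refine ⟨q / (4*(2*N)), ?_⟩
    have h := Nat.div_add_mod q (4*(2*N))
    rw [hqmod, hcls] at h
    omega
  obtain ⟨m, hm1, hm2⟩ : ∃ m : ℕ, q = (2*N-1) + 8*m ∧ m = N*k :=
    ⟨N*k, by rw [hk]; ring, rfl⟩
  set n : ℤ := (N:ℤ) with hn
  set D : ℤ := 2 + 8*(k:ℤ) with hD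
  have hmz : ((m:ℕ):ℤ) = n * (k:ℤ) := by rw [hm2]; push_cast; ring
  have hqz : (q:ℤ) = 2*n - 1 + 8*(m:ℤ) := by rw [hn]; omega
  have hnD : n * D = (q:ℤ) + 1 := by
    rw [hD]; linear_combination (-1)*hqz - 8*hmz
  set En : ℕ := 1 + 4*k with hEn
  have hEcast : ((En:ℕ):ℤ) = 1 + 4*(k:ℤ) := by push_cast [hEn]; ring
  have hEodd : Odd En := by rw [Nat.odd_iff]; omega
  have hE4 : En % 4 = 1 := by omega
  have hqodd : Odd q := hqp.odd_of_ne_two (by omega)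
  have hq8 : q % 8 = 1 := by omega
  have hq4 : q % 4 = 1 := by omega
  have hJm2 : jacobiSym (-2) q = 1 := by
    have hq2' : q % 2 = 1 := Nat.odd_iff.mp hqodd
    rw [jacobiSym.at_neg_two hqodd, ZMod.χ₈'_nat_eq_if_mod_eight]
    simp [hq8, hq2']
  have hrec : jacobiSym (En:ℤ) q = jacobiSym (q:ℤ) En :=
    jacobiSym.quadratic_reciprocity_one_mod_four' hEodd hq4
  have hmodD : jacobiSym (q:ℤ) En = jacobiSym (-1) En := by
    refine jacobiSym.mod_left' ?_
    have : ((q:ℤ)) ≡ -1 [ZMOD (En:ℕ)] := by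
      rw [Int.modEq_iff_dvd]
      exact ⟨-2*n, by rw [hEcast]; linarith [hnD]⟩
    exact this
  have hJm1E : jacobiSym (-1) En = 1 := by
    rw [jacobiSym.at_neg_one hEodd, ZMod.χ₄_nat_one_mod_four hE4]
  have hJD : jacobiSym (-D) q = 1 := by
    have hsplit : (-D) = (-2) * (En:ℤ) := by rw [hEcast, hD]; ring
    rw [hsplit, jacobiSym.mul_left, hJm2, hrec, hmodD, hJm1E]; ring
  obtain ⟨b, hdvd⟩ := sqrt_mod q hqp D hJD
  obtain ⟨a, ha⟩ := hdvd
  refine ⟨D, b, (q:ℤ), a, by omega, by exact_mod_cast hqp.one_lt.le,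
    by linarith [hnD], by linarith [ha]⟩

lemma caseC (N : ℕ) (hN2 : 2 ≤ N) (hmod : N % 8 = 3) :
    ∃ D b c₀ a : ℤ, 1 ≤ D ∧ 1 ≤ c₀ ∧ (N:ℤ)*D - 1 = c₀ ∧ a*c₀ = b^2 + D := by
  have hco : Nat.Coprime ((N-1)/2) (4*N) := by
    refine coprime_helper _ _ (by omega) (fun g hg1 hg2 => ?_)
    have hg1' : g ∣ N - 1 := dvd_trans hg1 ⟨2, by omega⟩
    have := Nat.dvd_sub hg2 hg1'
    rwa [show N - (N-1) = 1 from by omega] at this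
  obtain ⟨q, hqp, hqgt, hqmod⟩ := dirichlet_class (4*N) ((N-1)/2) (4*N) (by omega) hco
  have hcls : ((N-1)/2) % (4*N) = (N-1)/2 := Nat.mod_eq_of_lt (by omega)
  obtain ⟨k, hk⟩ : ∃ k : ℕ, q = (N-1)/2 + (4*N)*k := by
    refine ⟨q / (4*N), ?_⟩
    have h := Nat.div_add_mod q (4*N)
    rw [hqmod, hcls] at h
    omega
  obtain ⟨m, hm1, hm2⟩ : ∃ m : ℕ, q = (N-1)/2 + 4*m ∧ m = N*k :=
    ⟨N*k, by rw [hk]; ring, rfl⟩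
  set n : ℤ := (N:ℤ) with hn
  set D : ℤ := 1 + 8*(k:ℤ) with hD
  have hmz : ((m:ℕ):ℤ) = n * (k:ℤ) := by rw [hm2]; push_cast; ring
  have h2q : 2*(q:ℤ) = n - 1 + 8*(m:ℤ) := by rw [hn]; omega
  have hnD : n * D = 2*(q:ℤ) + 1 := by
    rw [hD]; linear_combination (-1)*h2q - 8*hmz
  set Dn : ℕ := 1 + 8*k with hDn
  have hDcast : ((Dn:ℕ):ℤ) = D := by push_cast [hD, hDn]; ring
  have hDodd : Odd Dn := by rw [Nat.odd_iff]; omega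
  have hD4 : Dn % 4 = 1 := by omega
  have hD8 : Dn % 8 = 1 := by omega
  have hqodd : Odd q := hqp.odd_of_ne_two (by omega)
  have hq4 : q % 4 = 1 := by omega
  have hJm1 : jacobiSym (-1) q = 1 := by
    rw [jacobiSym.at_neg_one hqodd, ZMod.χ₄_nat_one_mod_four hq4]
  have hrec : jacobiSym (Dn:ℤ) q = jacobiSym (q:ℤ) Dn :=
    jacobiSym.quadratic_reciprocity_one_mod_four' hDodd hq4
  have hJ2D : jacobiSym 2 Dn = 1 := by
    have hD2 : Dn % 2 = 1 := by omega
    rw [jacobiSym.at_two hDodd, ZMod.χ₈_nat_eq_if_mod_eight]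
    simp [hD8, hD2]
  have hJm1D : jacobiSym (-1) Dn = 1 := by
    rw [jacobiSym.at_neg_one hDodd, ZMod.χ₄_nat_one_mod_four hD4]
  have hmod2q : jacobiSym ((2*q : ℕ):ℤ) Dn = jacobiSym (-1) Dn := by
    refine jacobiSym.mod_left' ?_
    have : (((2*q : ℕ):ℤ)) ≡ -1 [ZMOD (Dn:ℕ)] := by
      rw [Int.modEq_iff_dvd]
      refine ⟨-n, ?_⟩
      rw [hDcast]
      push_cast
      linarith [hnD]
    exact this
  have hqD : jacobiSym (q:ℤ) Dn = 1 := by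
    have hmul : jacobiSym ((2*q : ℕ):ℤ) Dn = jacobiSym 2 Dn * jacobiSym (q:ℤ) Dn := by
      push_cast
      rw [← jacobiSym.mul_left]
    rw [hmul, hJ2D, one_mul] at hmod2q
    rw [hmod2q, hJm1D]
  have hJD : jacobiSym (-D) q = 1 := by
    have hsplit : (-D) = (-1) * (Dn:ℤ) := by rw [hDcast]; ring
    rw [hsplit, jacobiSym.mul_left, hJm1, hrec, hqD]; ring
  obtain ⟨b₀, hdvd⟩ := sqrt_mod q hqp D hJD
  -- make b odd
  set b : ℤ := if b₀ % 2 = 1 then b₀ else b₀ + q with hb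
  have hbodd : b % 2 = 1 := by
    rw [hb]
    split
    · assumption
    · have : (q:ℤ) % 2 = 1 := by
        have := Nat.odd_iff.mp hqodd
        omega
      omega
  have hdvd' : (q:ℤ) ∣ b^2 + D := by
    rw [hb]
    split
    · exact hdvd
    · obtain ⟨a₀, ha₀⟩ := hdvd
      exact ⟨a₀ + 2*b₀ + q, by linarith [ha₀]⟩
  have heven : (2:ℤ) ∣ b^2 + D := by
    obtain ⟨j, hj⟩ : ∃ j, b = 2*j + 1 := ⟨b/2, by omega⟩
    have : b^2 = 2*(2*j^2+2*j) + 1 := by rw [hj]; ring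
    omega
  obtain ⟨a₀, ha₀⟩ := hdvd'
  have ha₀even : a₀ % 2 = 0 := by
    have hqodd' : (q:ℤ) % 2 = 1 := by
      have := Nat.odd_iff.mp hqodd
      omega
    rcases Int.even_or_odd a₀ with h | h
    · obtain ⟨r, hr⟩ := h; omega
    · exfalso
      obtain ⟨j, hj⟩ := h
      obtain ⟨l, hl⟩ : ∃ l, (q:ℤ) = 2*l + 1 := ⟨(q:ℤ)/2, by omega⟩
      have : b^2 + D = 2*(2*l*j + l + j) + 1 := by rw [ha₀, hl, hj]; ring
      omega
  obtain ⟨a, rfl⟩ : ∃ a, a₀ = 2*a := ⟨a₀/2, by omega⟩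
  have hq1 : (1:ℤ) ≤ (q:ℤ) := by exact_mod_cast hqp.one_lt.le
  refine ⟨D, b, 2*(q:ℤ), a, by omega, by linarith, by linarith [hnD], by linarith [ha₀]⟩

lemma construct (n D b c₀ a : ℤ) (hn2 : 2 ≤ n) (hD : 1 ≤ D) (hc₀ : 1 ≤ c₀)
    (hc : n*D - 1 = c₀) (ha : a*c₀ = b^2 + D) :
    ∃ u v w : ℤ, u^2 + v^2 + w^2 = n := by
  have ha1 : 1 ≤ a := by nlinarith [sq_nonneg b]
  have hna : 1 ≤ n*a - 1 := by nlinarith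
  have hkey : ∀ x y z : ℤ, n*(n*a-1) * F3 n a c₀ b 0 1 x y z
      = (n*a-1)*(n*x+y)^2 + ((n*a-1)*y + n*b*z)^2 + n*z^2 := by
    intro x y z
    simp only [F3]
    linear_combination (n^2*z^2)*ha + (n*z^2)*hc
  have hdet : D3 n a c₀ b 0 1 = 1 := by
    simp only [D3]
    linear_combination n*ha + hc
  have hpos : ∀ x y z : ℤ, (x ≠ 0 ∨ y ≠ 0 ∨ z ≠ 0) → 1 ≤ F3 n a c₀ b 0 1 x y z := by
    intro x y z hne
    by_contra hcon
    push_neg at hcon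
    have hF : F3 n a c₀ b 0 1 x y z ≤ 0 := by omega
    have hk := hkey x y z
    have hnn : 0 ≤ n*(n*a-1) := by nlinarith
    have hprod : n*(n*a-1) * F3 n a c₀ b 0 1 x y z ≤ 0 := by
      nlinarith [mul_nonneg hnn (neg_nonneg.mpr hF)]
    have hz2 : z^2 ≤ 0 := by
      nlinarith [sq_nonneg (n*x+y), sq_nonneg ((n*a-1)*y + n*b*z)]
    have hz : z = 0 := by
      have h0 : z^2 = 0 := le_antisymm hz2 (sq_nonneg z)
      exact pow_eq_zero_iff (by norm_num) |>.mp h0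
    subst hz
    have hy2 : ((n*a-1)*y)^2 ≤ 0 := by
      nlinarith [sq_nonneg (n*x+y)]
    have hy : y = 0 := by
      have h0 : ((n*a-1)*y)^2 = 0 := le_antisymm hy2 (sq_nonneg _)
      have h1 : (n*a-1)*y = 0 := pow_eq_zero_iff (by norm_num) |>.mp h0
      rcases mul_eq_zero.mp h1 with h | h
      · omega
      · exact h
    subst hy
    have hx2 : (n*x)^2 ≤ 0 := by nlinarith [sq_nonneg (n*x)]
    have hx : x = 0 := by
      have h0 : (n*x)^2 = 0 := le_antisymm hx2 (sq_nonneg _)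
      have h1 : n*x = 0 := pow_eq_zero_iff (by norm_num) |>.mp h0
      rcases mul_eq_zero.mp h1 with h | h
      · omega
      · exact h
    tauto
  refine ternary_rep n a c₀ b 0 1 n hpos hdet ⟨1, 0, 0, by simp [F3]⟩

lemma threeSqSufNat : ∀ N : ℕ, (¬ ∃ s t : ℕ, (N:ℤ) = 4^s*(8*t+7)) →
    ∃ a b c : ℤ, a^2+b^2+c^2 = (N:ℤ) := by
  intro N
  induction N using Nat.strong_induction_on with
  | _ N ih =>
    intro h
    by_cases h0 : N = 0
    · exact ⟨0, 0, 0, by simp [h0]⟩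
    by_cases h1 : N = 1
    · exact ⟨1, 0, 0, by simp [h1]⟩
    by_cases h4 : 4 ∣ N
    · obtain ⟨N', rfl⟩ := h4
      have hlt : N' < 4 * N' := by omega
      have h' : ¬ ∃ s t : ℕ, (N':ℤ) = 4^s*(8*t+7) := by
        rintro ⟨s, t, hst⟩
        refine h ⟨s+1, t, ?_⟩
        push_cast
        rw [pow_succ]
        push_cast at hst
        linarith [hst]
      obtain ⟨a, b, c, habc⟩ := ih N' hlt h'
      refine ⟨2*a, 2*b, 2*c, by push_cast; linarith [habc]⟩
    · have h8 : N % 8 ≠ 7 := by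
        intro h8
        obtain ⟨t, ht⟩ : ∃ t:ℕ, N = 8*t+7 := ⟨(N-7)/8, by omega⟩
        refine h ⟨0, t, ?_⟩
        rw [ht]
        push_cast
        ring
      have hN2 : 2 ≤ N := by omega
      have hDba : ∃ D b c₀ a : ℤ, 1 ≤ D ∧ 1 ≤ c₀ ∧ (N:ℤ)*D - 1 = c₀ ∧ a*c₀ = b^2 + D := by
        rcases (by omega : N % 4 = 2 ∨ N % 8 = 1 ∨ N % 8 = 5 ∨ N % 8 = 3) with hm | hm | hm | hm
        · exact caseA N hN2 hm
        · exact caseB N hN2 (Or.inl hm)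
        · exact caseB N hN2 (Or.inr hm)
        · exact caseC N hN2 hm
      obtain ⟨D, b, c₀, a, hD, hc₀, hc, ha⟩ := hDba
      exact construct (N:ℤ) D b c₀ a (by exact_mod_cast hN2) hD hc₀ hc ha

theorem threeSqSuf (m : ℤ) (hm : 0 ≤ m) (h : ¬ ∃ s t : ℕ, m = 4^s * (8*t+7)) :
    ∃ a b c : ℤ, a^2+b^2+c^2 = m := by
  obtain ⟨N, rfl⟩ : ∃ N : ℕ, (N:ℤ) = m := ⟨m.toNat, by omega⟩
  exact threeSqSufNat N h

lemma pair_helper (m u v w : ℤ) (h : u^2+v^2+w^2 = 2*m) (huv : (u+v) % 2 = 0)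
    (hw : w % 2 = 0) : ∃ x y z : ℤ, x^2+y^2+2*z^2 = m := by
  obtain ⟨x, hx⟩ : ∃ x, u + v = 2*x := ⟨(u+v)/2, by omega⟩
  obtain ⟨y, hy⟩ : ∃ y, u - v = 2*y := ⟨(u-v)/2, by omega⟩
  obtain ⟨z, hz⟩ : ∃ z, w = 2*z := ⟨w/2, by omega⟩
  obtain rfl : u = x + y := by omega
  obtain rfl : v = x - y := by omega
  subst hz
  refine ⟨x, y, z, by ring_nf at h ⊢; linarith⟩

theorem stmt18 (n : ℤ) (hn : 0 ≤ n) :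
    (∃ x y z : ℤ, 3*x^2 + 3*y^2 + 6*z^2 = n) ↔
    (3 ∣ n ∧ ¬ ∃ s t : ℕ, n = 6 * 4^s * (8*t + 7)) := by
  constructor
  · rintro ⟨x, y, z, hxyz⟩
    refine ⟨⟨x^2 + y^2 + 2*z^2, by linarith⟩, ?_⟩
    rintro ⟨s, t, h⟩
    refine threeSqNec (s+1) t (x+y) (x-y) (2*z) ?_
    have h4 : (4:ℤ)^(s+1) = 4 * 4^s := by ring
    nlinarith [hxyz, h, h4]
  · rintro ⟨⟨m, rfl⟩, h7⟩
    have hm : 0 ≤ m := by linarith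
    have h2m : ¬ ∃ s t : ℕ, 2*m = 4^s * (8*t+7) := by
      rintro ⟨s, t, h⟩
      cases s with
      | zero => simp at h; omega
      | succ s =>
        refine h7 ⟨s, t, ?_⟩
        have h4 : (4:ℤ)^(s+1) = 4 * 4^s := by ring
        nlinarith [h, h4]
    obtain ⟨a, b, c, habc⟩ := threeSqSuf (2*m) (by linarith) h2m
    have ha := sq4 a; have hb := sq4 b; have hc := sq4 c
    have key : ((a+b)%2 = 0 ∧ c%2 = 0) ∨ ((a+c)%2 = 0 ∧ b%2 = 0) ∨
        ((b+c)%2 = 0 ∧ a%2 = 0) := by omega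
    have hform : ∃ x y z : ℤ, x^2+y^2+2*z^2 = m := by
      rcases key with ⟨h1, h2⟩ | ⟨h1, h2⟩ | ⟨h1, h2⟩
      · exact pair_helper m a b c habc h1 h2
      · exact pair_helper m a c b (by linarith) h1 h2
      · exact pair_helper m b c a (by linarith) h1 h2
    obtain ⟨x, y, z, hx⟩ := hform
    exact ⟨x, y, z, by linarith⟩
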